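/- arXiv:0910.4629 — 6 statements merged into one kernel-verified Lean document; each statement's English description precedes it below -/
import Mathlib

section
/- Let M = {M_1, ..., M_f} be a collection of f mutually unbiased orthonormal bases of ℝ^d (any two vectors x, y from different bases satisfy ⟨x,y⟩ = ±1/√d), with d ≥ 2 and f ≥ 2. Then f ≤ d/2 + 1. -/
open scoped RealInnerProductSpace

/-- outer-product vector of `y` in `Fin d × Fin d → ℝ`. -/
private def mubV (d : ℕ) (y : Fin d → ℝ) : Fin d × Fin d → ℝ := fun p => y p.1 * y p.2

/-- the identity matrix as a vector. -/
private def mubE (d : ℕ) : Fin d × Fin d → ℝ := fun p => if p.1 = p.2 then 1 else 0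

private lemma mub_T1 (d : ℕ) (y z : Fin d → ℝ) :
    (∑ p : Fin d × Fin d, mubV d y p * mubV d z p)
      = (∑ t, y t * z t) * (∑ t, y t * z t) := by
  rw [Fintype.sum_prod_type, Finset.sum_mul_sum]
  refine Finset.sum_congr rfl fun p1 _ => Finset.sum_congr rfl fun p2 _ => ?_
  simp only [mubV]
  ring

private lemma mub_T2 (d : ℕ) (y : Fin d → ℝ) :
    (∑ p : Fin d × Fin d, mubE d p * mubV d y p) = ∑ t, y t * y t := by
  rw [Fintype.sum_prod_type]
  simp [mubE, mubV, ite_mul]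

private lemma mub_T3 (d : ℕ) :
    (∑ p : Fin d × Fin d, mubE d p * mubE d p) = d := by
  rw [Fintype.sum_prod_type]
  simp [mubE]

private lemma mub_pair (d : ℕ) (hd : (d : ℝ) ≠ 0) (y z : Fin d → ℝ)
    (hy : (∑ t, y t * y t) = 1) (hz : (∑ t, z t * z t) = 1) :
    (∑ p : Fin d × Fin d, (mubV d y p - mubE d p / d) * (mubV d z p - mubE d p / d))
      = (∑ t, y t * z t) * (∑ t, y t * z t) - 1 / d := by
  have expand : ∀ p : Fin d × Fin d,
      (mubV d y p - mubE d p / d) * (mubV d z p - mubE d p / d)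
        = mubV d y p * mubV d z p - (mubE d p * mubV d y p) / d
            - (mubE d p * mubV d z p) / d + (mubE d p * mubE d p) / (d * d) := by
    intro p; ring
  rw [Finset.sum_congr rfl fun p _ => expand p]
  rw [Finset.sum_add_distrib, Finset.sum_sub_distrib, Finset.sum_sub_distrib,
    ← Finset.sum_div, ← Finset.sum_div, ← Finset.sum_div,
    mub_T1, mub_T2, mub_T2, mub_T3, hy, hz]
  field_simp
  ring

private lemma mub_pair_e (d : ℕ) (hd : (d : ℝ) ≠ 0) (y : Fin d → ℝ)
    (hy : (∑ t, y t * y t) = 1) :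
    (∑ p : Fin d × Fin d, (mubV d y p - mubE d p / d) * mubE d p) = 0 := by
  have expand : ∀ p : Fin d × Fin d,
      (mubV d y p - mubE d p / d) * mubE d p
        = mubE d p * mubV d y p - (mubE d p * mubE d p) / d := by
    intro p; ring
  rw [Finset.sum_congr rfl fun p _ => expand p, Finset.sum_sub_distrib, ← Finset.sum_div,
    mub_T2, mub_T3, hy]
  field_simp
  ring

/-- A collection of `f` mutually unbiased orthonormal bases of `ℝ^d` (`d ≥ 2`, `f ≥ 2`)
satisfies `f ≤ d/2 + 1`. -/
theorem mub_upper_bound (d f : ℕ) (hd : 2 ≤ d) (hf : 2 ≤ f)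
    (B : Fin f → Fin d → EuclideanSpace ℝ (Fin d))
    (horth : ∀ i, Orthonormal ℝ (B i))
    (hbasis : ∀ i, Submodule.span ℝ (Set.range (B i)) = ⊤)
    (hmub : ∀ i j a b, i ≠ j →
      ⟪B i a, B j b⟫ = 1 / Real.sqrt d ∨ ⟪B i a, B j b⟫ = -(1 / Real.sqrt d)) :
    (f : ℝ) ≤ (d : ℝ) / 2 + 1 := by
  classical
  have hd0 : 0 < d := by omega
  have hdR : (d : ℝ) ≠ 0 := by
    exact (Nat.cast_pos (α := ℝ)).mpr hd0 |>.ne'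
  -- the component functions
  set x : Fin f → Fin d → Fin d → ℝ := fun i a t => B i a t with hxdef
  have hip : ∀ i j a b, (∑ t, x i a t * x j b t) = ⟪B i a, B j b⟫ := by
    intro i j a b
    simp [PiLp.inner_apply, RCLike.inner_apply, hxdef]
    exact Finset.sum_congr rfl fun t _ => mul_comm _ _
  have horth' : ∀ i a b, (∑ t, x i a t * x i b t) = if a = b then 1 else 0 := by
    intro i a b
    rw [hip]
    exact orthonormal_iff_ite.mp (horth i) a b
  have hnorm : ∀ i a, (∑ t, x i a t * x i a t) = 1 := by
    intro i a; simpa using horth' i a a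
  have hcross : ∀ i j a b, i ≠ j →
      (∑ t, x i a t * x j b t) * (∑ t, x i a t * x j b t) = 1 / d := by
    intro i j a b hij
    rw [hip]
    have hsq : Real.sqrt d * Real.sqrt d = d := Real.mul_self_sqrt (by positivity)
    rcases hmub i j a b hij with h | h <;> rw [h]
    · rw [div_mul_div_comm, one_mul, hsq]
    · rw [neg_mul_neg, div_mul_div_comm, one_mul, hsq]
  -- the linearly independent family
  let emb : Fin (d - 1) → Fin d := fun a => ⟨a.1, lt_of_lt_of_le a.2 (Nat.sub_le d 1)⟩
  have hembinj : Function.Injective emb := by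
    intro a b hab
    have h2 : (emb a).1 = (emb b).1 := congrArg Fin.val hab
    exact Fin.ext h2
  let lst : Fin d := ⟨d - 1, by omega⟩
  have hemblst : ∀ a, emb a ≠ lst := by
    intro a h
    have := congrArg Fin.val h
    have h2 := a.2
    simp only [emb, lst] at this
    omega
  let w : Option (Fin f × Fin (d - 1)) → (Fin d × Fin d → ℝ) := fun k =>
    k.elim (mubE d) (fun ia p => mubV d (x ia.1 (emb ia.2)) p - mubE d p / d)
  let W : Option (Fin f × Fin (d - 1)) → ({p : Fin d × Fin d // p.1 ≤ p.2} → ℝ) :=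
    fun k q => w k q.1
  have hLI : LinearIndependent ℝ W := by
    rw [Fintype.linearIndependent_iff]
    intro g hg
    have key : ∀ p1 p2 : Fin d, p1 ≤ p2 → (∑ k, g k * w k (p1, p2)) = 0 := by
      intro p1 p2 h
      have := congrFun hg ⟨(p1, p2), h⟩
      simpa [W, Finset.sum_apply] using this
    have hsymm : ∀ k p1 p2, w k (p1, p2) = w k (p2, p1) := by
      rintro (_ | ⟨i, a⟩) p1 p2
      · simp [w, mubE, eq_comm]
      · have h1 : (if p1 = p2 then (1:ℝ) else 0) = (if p2 = p1 then 1 else 0) := by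
          simp [eq_comm]
        simp only [w, Option.elim, mubV, mubE]
        rw [mul_comm, h1]
    have hu : ∀ p : Fin d × Fin d, (∑ k, g k * w k p) = 0 := by
      rintro ⟨p1, p2⟩
      rcases le_total p1 p2 with h | h
      · exact key p1 p2 h
      · rw [Finset.sum_congr rfl fun k _ => by rw [hsymm k p1 p2]]
        exact key p2 p1 h
    -- pairing against a test vector
    have hswap : ∀ t : Fin d × Fin d → ℝ,
        (∑ k, g k * (∑ p : Fin d × Fin d, w k p * t p)) = 0 := by
      intro t
      have e1 : (∑ k, g k * (∑ p : Fin d × Fin d, w k p * t p))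
          = ∑ k, ∑ p : Fin d × Fin d, g k * w k p * t p := by
        refine Finset.sum_congr rfl fun k _ => ?_
        rw [Finset.mul_sum]
        exact Finset.sum_congr rfl fun p _ => by ring
      rw [e1, Finset.sum_comm]
      have e2 : ∀ p : Fin d × Fin d, (∑ k, g k * w k p * t p)
          = (∑ k, g k * w k p) * t p := by
        intro p; rw [Finset.sum_mul]
      rw [Finset.sum_congr rfl fun p _ => e2 p]
      refine Finset.sum_eq_zero fun p _ => ?_
      rw [hu p, zero_mul]
    -- pairing values against `mubV (x j b) - mubE/d`
    have hjb : ∀ (j : Fin f) (b : Fin d),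
        (∑ a : Fin (d - 1), g (some (j, a)) * ((if emb a = b then (1:ℝ) else 0) - 1 / d))
          = 0 := by
      intro j b
      have h0 := hswap (fun p => mubV d (x j b) p - mubE d p / d)
      simp only [Fintype.sum_option] at h0
      have hnone : (∑ p : Fin d × Fin d,
          w none p * (mubV d (x j b) p - mubE d p / d)) = 0 := by
        have he : ∀ p : Fin d × Fin d,
            w none p * (mubV d (x j b) p - mubE d p / d)
              = (mubV d (x j b) p - mubE d p / d) * mubE d p := by
          intro p; simp only [w, Option.elim]; ring
        rw [Finset.sum_congr rfl fun p _ => he p]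
        exact mub_pair_e d hdR _ (hnorm j b)
      have hsome : ∀ ia : Fin f × Fin (d - 1),
          (∑ p : Fin d × Fin d, w (some ia) p * (mubV d (x j b) p - mubE d p / d))
            = if ia.1 = j then ((if emb ia.2 = b then (1:ℝ) else 0) - 1 / d) else 0 := by
        intro ia
        have h1 : (∑ p : Fin d × Fin d,
            w (some ia) p * (mubV d (x j b) p - mubE d p / d))
              = (∑ t, x ia.1 (emb ia.2) t * x j b t) * (∑ t, x ia.1 (emb ia.2) t * x j b t)
                  - 1 / d :=
          mub_pair d hdR (x ia.1 (emb ia.2)) (x j b) (hnorm ia.1 (emb ia.2)) (hnorm j b)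
        rw [h1]
        by_cases hij : ia.1 = j
        · subst hij
          rw [horth' ia.1 (emb ia.2) b, if_pos rfl]
          by_cases hab : emb ia.2 = b <;> simp [hab]
        · rw [hcross ia.1 j (emb ia.2) b hij, if_neg hij]
          ring
      rw [hnone, mul_zero, zero_add] at h0
      rw [Finset.sum_congr rfl fun ia _ => by rw [hsome ia]] at h0
      rw [Fintype.sum_prod_type] at h0
      have hrow : ∀ i : Fin f, i ≠ j →
          (∑ a : Fin (d - 1), g (some (i, a))
            * (if (i, a).1 = j then ((if emb (i, a).2 = b then (1:ℝ) else 0) - 1 / d) else 0))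
            = 0 := by
        intro i hij
        refine Finset.sum_eq_zero fun a _ => ?_
        rw [if_neg hij, mul_zero]
      rw [Finset.sum_eq_single_of_mem j (Finset.mem_univ j)
        (fun i _ hij => hrow i hij)] at h0
      simpa using h0
    -- row sums vanish
    have hsum0 : ∀ j : Fin f, (∑ a : Fin (d - 1), g (some (j, a))) = 0 := by
      intro j
      have h0 := hjb j lst
      have he : ∀ a : Fin (d - 1),
          g (some (j, a)) * ((if emb a = lst then (1:ℝ) else 0) - 1 / d)
            = g (some (j, a)) * (-(1 / d)) := by
        intro a; rw [if_neg (hemblst a)]; ring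
      rw [Finset.sum_congr rfl fun a _ => he a, ← Finset.sum_mul] at h0
      rcases mul_eq_zero.mp h0 with h | h
      · exact h
      · exact absurd h (by simp [hdR])
    -- individual coefficients vanish
    have hcoef : ∀ (j : Fin f) (a : Fin (d - 1)), g (some (j, a)) = 0 := by
      intro j a0
      have h0 := hjb j (emb a0)
      have he : ∀ a : Fin (d - 1),
          g (some (j, a)) * ((if emb a = emb a0 then (1:ℝ) else 0) - 1 / d)
            = g (some (j, a)) * (if a = a0 then (1:ℝ) else 0)
                - g (some (j, a)) * (1 / d) := by
        intro a
        simp only [hembinj.eq_iff]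
        ring
      rw [Finset.sum_congr rfl fun a _ => he a, Finset.sum_sub_distrib,
        ← Finset.sum_mul, hsum0 j, zero_mul, sub_zero] at h0
      simpa using h0
    -- the `none` coefficient vanishes
    have hnone0 : g none = 0 := by
      have h0 := hswap (mubE d)
      simp only [Fintype.sum_option] at h0
      have h1 : (∑ p : Fin d × Fin d, w none p * mubE d p) = d := by
        simpa [w] using mub_T3 d
      have h2 : ∀ ia : Fin f × Fin (d - 1),
          (∑ p : Fin d × Fin d, w (some ia) p * mubE d p) = 0 :=
        fun ia => mub_pair_e d hdR (x ia.1 (emb ia.2)) (hnorm ia.1 (emb ia.2))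
      rw [h1, Finset.sum_congr rfl fun ia _ => by rw [h2 ia, mul_zero],
        Finset.sum_const, smul_zero, add_zero] at h0
      exact (mul_eq_zero.mp h0).resolve_right hdR
    rintro (_ | ⟨j, a⟩)
    · exact hnone0
    · exact hcoef j a
  -- dimension count
  have hcard := hLI.fintype_card_le_finrank
  have hn : f * (d - 1) + 1 ≤ (d + 1).choose 2 := by
    calc f * (d - 1) + 1 = Fintype.card (Option (Fin f × Fin (d - 1))) := by simp [mul_comm]
      _ ≤ Module.finrank ℝ ({p : Fin d × Fin d // p.1 ≤ p.2} → ℝ) := hcard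
      _ = Fintype.card {p : Fin d × Fin d // p.1 ≤ p.2} := Module.finrank_pi ℝ
      _ = (d + 1).choose 2 := by
          rw [← Fintype.card_congr Sym2.sortEquiv, Sym2.card, Fintype.card_fin]
  rw [Nat.choose_two_right] at hn
  obtain ⟨e, rfl⟩ : ∃ e, d = e + 2 := ⟨d - 2, by omega⟩
  have hn' : f * (e + 1) + 1 ≤ (e + 3) * (e + 2) / 2 := by
    have h1 : e + 2 - 1 = e + 1 := by omega
    have h2 : e + 2 + 1 - 1 = e + 2 := by omega
    rw [h1] at hn
    rw [h2] at hn
    exact hn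
  have hev : 2 ∣ (e + 3) * (e + 2) := by
    rw [mul_comm]
    exact ((e + 2).even_mul_succ_self).two_dvd
  have h2 : 2 * (f * (e + 1) + 1) ≤ (e + 3) * (e + 2) := by
    calc 2 * (f * (e + 1) + 1) ≤ 2 * ((e + 3) * (e + 2) / 2) := Nat.mul_le_mul_left 2 hn'
      _ = (e + 3) * (e + 2) := Nat.mul_div_cancel' hev
  have h3 : (2 * f) * (e + 1) + 2 ≤ (e + 4) * (e + 1) + 2 := by
    calc (2 * f) * (e + 1) + 2 = 2 * (f * (e + 1) + 1) := by ring
      _ ≤ (e + 3) * (e + 2) := h2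
      _ = (e + 4) * (e + 1) + 2 := by ring
  have h4 : 2 * f ≤ e + 4 :=
    Nat.le_of_mul_le_mul_right (Nat.le_of_add_le_add_right h3) (Nat.succ_pos e)
  have h5 : (2 * f : ℝ) ≤ (e : ℝ) + 4 := by exact_mod_cast h4
  push_cast
  linarith
end

section
/- Let (X,I) be a linked system of symmetric (v,k,λ) designs on f ≥ 3 fibers. Then the pair of constants (σ,τ) defined by the linking condition satisfies (σ,τ) = ((k² - √n(v-k))/v, k(k + √n)/v) or (σ,τ) = ((k² + √n(v-k))/v, k(k - √n)/v), where n = k - λ; in particular n is a perfect square. -/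
/-- For a linked system of symmetric `(v,k,λ)` designs on `f ≥ 3` fibers, the linking
constants `(σ, τ)` are `((k² ∓ √n(v-k))/v, k(k ± √n)/v)` where `n = k - λ`; in particular
`n` is a perfect square. -/
theorem linked_design_sigma_tau (f v k lam σ τ : ℕ) (hf : 3 ≤ f) (hv : 0 < v)
    (hk : 0 < k) (hkv : k < v) (hlk : lam < k)
    (R : Fin f × Fin v → Fin f × Fin v → Prop) [DecidableRel R]
    (hsym : ∀ p q, R p q ↔ R q p)
    (hreg : ∀ (i j : Fin f) (x : Fin v), i ≠ j →
      (Finset.univ.filter fun y => R (i, x) (j, y)).card = k)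
    (hlam : ∀ (i j : Fin f) (x x' : Fin v), i ≠ j → x ≠ x' →
      (Finset.univ.filter fun y => R (i, x) (j, y) ∧ R (i, x') (j, y)).card = lam)
    (hlink : ∀ (i j l : Fin f) (x y : Fin v), i ≠ j → j ≠ l → i ≠ l →
      (Finset.univ.filter fun z => R (i, x) (l, z) ∧ R (j, y) (l, z)).card =
        if R (i, x) (j, y) then σ else τ) :
    ∃ m : ℕ, k - lam = m ^ 2 ∧
      (((σ : ℝ) = ((k : ℝ) ^ 2 - (m : ℝ) * ((v : ℝ) - k)) / v ∧
          (τ : ℝ) = (k : ℝ) * ((k : ℝ) + m) / v) ∨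
       ((σ : ℝ) = ((k : ℝ) ^ 2 + (m : ℝ) * ((v : ℝ) - k)) / v ∧
          (τ : ℝ) = (k : ℝ) * ((k : ℝ) - m) / v)) := by
  classical
  have hf0 : (0:ℕ) < f := by omega
  have hf1 : (1:ℕ) < f := by omega
  have hf2 : (2:ℕ) < f := by omega
  set i : Fin f := ⟨0, hf0⟩ with hi
  set j : Fin f := ⟨1, hf1⟩ with hj
  set l : Fin f := ⟨2, hf2⟩ with hl'
  have hij : i ≠ j := by simp [hi, hj, Fin.ext_iff]
  have hjl : j ≠ l := by simp [hj, hl', Fin.ext_iff]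
  have hil : i ≠ l := by simp [hi, hl', Fin.ext_iff]
  set x0 : Fin v := ⟨0, hv⟩ with hx0
  -- the fiber-`l` neighborhood of `x0`, of size `k`
  have hA : (Finset.univ.filter fun z => R (i, x0) (l, z)).card = k := hreg i l x0 hil
  have hB : (Finset.univ.filter fun y => R (i, x0) (j, y)).card = k := hreg i j x0 hij
  have hBnot : (Finset.univ.filter fun y => ¬ R (i, x0) (j, y)).card = v - k := by
    have h := Finset.card_filter_add_card_filter_not
      (s := (Finset.univ : Finset (Fin v))) (p := fun y => R (i, x0) (j, y))
    rw [hB, Finset.card_univ, Fintype.card_fin] at h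
    omega
  -- ======== E3 : k + (v-1)*lam = k*k  (symmetric design identity) ========
  have E3 : k + (v - 1) * lam = k * k := by
    have hswap :
        ∑ x' : Fin v, (Finset.univ.filter fun y => R (i, x0) (j, y) ∧ R (i, x') (j, y)).card
          = ∑ y : Fin v,
              (Finset.univ.filter fun x' => R (i, x0) (j, y) ∧ R (i, x') (j, y)).card := by
      simp only [Finset.card_filter]
      exact Finset.sum_comm
    have hLHS :
        ∑ x' : Fin v, (Finset.univ.filter fun y => R (i, x0) (j, y) ∧ R (i, x') (j, y)).card
          = k + (v - 1) * lam := by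
      rw [← Finset.add_sum_erase _ _ (Finset.mem_univ x0)]
      congr 1
      · rw [show (Finset.univ.filter fun y => R (i, x0) (j, y) ∧ R (i, x0) (j, y))
            = Finset.univ.filter fun y => R (i, x0) (j, y) from
          Finset.filter_congr fun y _ => by tauto]
        exact hB
      · rw [Finset.sum_congr rfl
          (fun x' hx' => hlam i j x0 x' hij (Ne.symm (Finset.ne_of_mem_erase hx')))]
        rw [Finset.sum_const, Finset.card_erase_of_mem (Finset.mem_univ x0),
          Finset.card_univ, Fintype.card_fin, smul_eq_mul]
    have hRHS :
        ∑ y : Fin v, (Finset.univ.filter fun x' => R (i, x0) (j, y) ∧ R (i, x') (j, y)).card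
          = k * k := by
      have hval : ∀ y : Fin v,
          (Finset.univ.filter fun x' => R (i, x0) (j, y) ∧ R (i, x') (j, y)).card
            = if R (i, x0) (j, y) then k else 0 := by
        intro y
        by_cases hy : R (i, x0) (j, y)
        · rw [if_pos hy,
            show (Finset.univ.filter fun x' => R (i, x0) (j, y) ∧ R (i, x') (j, y))
              = Finset.univ.filter fun x' => R (j, y) (i, x') from
            Finset.filter_congr fun x' _ => by rw [hsym (i,x') (j,y)]; tauto]
          exact hreg j i y hij.symm
        · rw [if_neg hy]
          simp [hy]
      rw [Finset.sum_congr rfl fun y _ => hval y, ← Finset.sum_filter,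
        Finset.sum_const, hB, smul_eq_mul]
    rw [hLHS, hRHS] at hswap
    exact hswap
  -- ======== E1 : k*σ + (v-k)*τ = k*k ========
  have E1 : k * σ + (v - k) * τ = k * k := by
    have hswap :
        ∑ y : Fin v, (Finset.univ.filter fun z => R (i, x0) (l, z) ∧ R (j, y) (l, z)).card
          = ∑ z : Fin v,
              (Finset.univ.filter fun y => R (i, x0) (l, z) ∧ R (j, y) (l, z)).card := by
      simp only [Finset.card_filter]
      exact Finset.sum_comm
    have hLHS :
        ∑ y : Fin v, (Finset.univ.filter fun z => R (i, x0) (l, z) ∧ R (j, y) (l, z)).card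
          = k * σ + (v - k) * τ := by
      rw [Finset.sum_congr rfl fun y _ => hlink i j l x0 y hij hjl hil]
      rw [Finset.sum_ite, Finset.sum_const, Finset.sum_const, hB, hBnot,
        smul_eq_mul, smul_eq_mul]
    have hRHS :
        ∑ z : Fin v, (Finset.univ.filter fun y => R (i, x0) (l, z) ∧ R (j, y) (l, z)).card
          = k * k := by
      have hval : ∀ z : Fin v,
          (Finset.univ.filter fun y => R (i, x0) (l, z) ∧ R (j, y) (l, z)).card
            = if R (i, x0) (l, z) then k else 0 := by
        intro z
        by_cases hz : R (i, x0) (l, z)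
        · rw [if_pos hz,
            show (Finset.univ.filter fun y => R (i, x0) (l, z) ∧ R (j, y) (l, z))
              = Finset.univ.filter fun y => R (l, z) (j, y) from
            Finset.filter_congr fun y _ => by rw [hsym (j,y) (l,z)]; tauto]
          exact hreg l j z hjl.symm
        · rw [if_neg hz]
          simp [hz]
      rw [Finset.sum_congr rfl fun z _ => hval z, ← Finset.sum_filter,
        Finset.sum_const, hA, smul_eq_mul]
    rw [hLHS, hRHS] at hswap
    exact hswap
  -- ======== E2 : k*(σ*σ) + (v-k)*(τ*τ) = k*(k*lam + (k-lam)) ========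
  have E2 : k * (σ * σ) + (v - k) * (τ * τ) = k * (k * lam + (k - lam)) := by
    have expand : ∀ y : Fin v,
        (Finset.univ.filter fun z => R (i, x0) (l, z) ∧ R (j, y) (l, z)).card
            * (Finset.univ.filter fun z => R (i, x0) (l, z) ∧ R (j, y) (l, z)).card
          = ∑ z : Fin v, ∑ z' : Fin v,
              (if (R (i, x0) (l, z) ∧ R (j, y) (l, z))
                  ∧ (R (i, x0) (l, z') ∧ R (j, y) (l, z')) then 1 else 0) := by
      intro y
      rw [Finset.card_filter, Finset.sum_mul_sum]
      refine Finset.sum_congr rfl fun z _ => Finset.sum_congr rfl fun z' _ => ?_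
      by_cases h1 : R (i, x0) (l, z) ∧ R (j, y) (l, z) <;>
        by_cases h2 : R (i, x0) (l, z') ∧ R (j, y) (l, z') <;> simp [h1, h2]
    have hswap :
        ∑ y : Fin v, (Finset.univ.filter fun z => R (i, x0) (l, z) ∧ R (j, y) (l, z)).card
            * (Finset.univ.filter fun z => R (i, x0) (l, z) ∧ R (j, y) (l, z)).card
          = ∑ z : Fin v, ∑ z' : Fin v,
              (Finset.univ.filter fun y =>
                (R (i, x0) (l, z) ∧ R (j, y) (l, z))
                  ∧ (R (i, x0) (l, z') ∧ R (j, y) (l, z'))).card := by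
      rw [Finset.sum_congr rfl fun y _ => expand y, Finset.sum_comm]
      refine Finset.sum_congr rfl fun z _ => ?_
      rw [Finset.sum_comm]
      exact Finset.sum_congr rfl fun z' _ => (Finset.card_filter _ _).symm
    have hcard2 : ∀ z z' : Fin v,
        (Finset.univ.filter fun y =>
            (R (i, x0) (l, z) ∧ R (j, y) (l, z))
              ∧ (R (i, x0) (l, z') ∧ R (j, y) (l, z'))).card
          = if R (i, x0) (l, z) ∧ R (i, x0) (l, z') then (if z = z' then k else lam)
            else 0 := by
      intro z z'
      by_cases hz : R (i, x0) (l, z)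
      · by_cases hz' : R (i, x0) (l, z')
        · rw [if_pos ⟨hz, hz'⟩]
          by_cases hzz : z = z'
          · subst hzz
            rw [if_pos rfl,
              show (Finset.univ.filter fun y =>
                  (R (i, x0) (l, z) ∧ R (j, y) (l, z))
                    ∧ (R (i, x0) (l, z) ∧ R (j, y) (l, z)))
                = Finset.univ.filter fun y => R (l, z) (j, y) from
              Finset.filter_congr fun y _ => by rw [hsym (j,y) (l,z)]; tauto]
            exact hreg l j z hjl.symm
          · rw [if_neg hzz,
              show (Finset.univ.filter fun y =>
                  (R (i, x0) (l, z) ∧ R (j, y) (l, z))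
                    ∧ (R (i, x0) (l, z') ∧ R (j, y) (l, z')))
                = Finset.univ.filter fun y => R (l, z) (j, y) ∧ R (l, z') (j, y) from
              Finset.filter_congr fun y _ => by
                rw [hsym (j,y) (l,z), hsym (j,y) (l,z')]; tauto]
            exact hlam l j z z' (Ne.symm hjl) hzz
        · rw [if_neg (by tauto)]
          simp [hz']
      · rw [if_neg (by tauto)]
        simp [hz]
    have hRHS :
        ∑ z : Fin v, ∑ z' : Fin v,
            (Finset.univ.filter fun y =>
              (R (i, x0) (l, z) ∧ R (j, y) (l, z))
                ∧ (R (i, x0) (l, z') ∧ R (j, y) (l, z'))).card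
          = k * (k * lam + (k - lam)) := by
      rw [Finset.sum_congr rfl fun z _ => Finset.sum_congr rfl fun z' _ => hcard2 z z']
      have step1 : ∀ z : Fin v,
          (∑ z' : Fin v, if R (i, x0) (l, z) ∧ R (i, x0) (l, z')
              then (if z = z' then k else lam) else 0)
            = if R (i, x0) (l, z)
              then (∑ z' ∈ Finset.univ.filter fun z' => R (i, x0) (l, z'),
                  (if z = z' then k else lam))
              else 0 := by
        intro z
        by_cases hz : R (i, x0) (l, z)
        · rw [if_pos hz, Finset.sum_filter]
          refine Finset.sum_congr rfl fun z' _ => ?_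
          by_cases hz' : R (i, x0) (l, z') <;> simp [hz, hz']
        · rw [if_neg hz]
          refine Finset.sum_eq_zero fun z' _ => ?_
          simp [hz]
      rw [Finset.sum_congr rfl fun z _ => step1 z, ← Finset.sum_filter]
      have step2 : ∀ z ∈ Finset.univ.filter fun z => R (i, x0) (l, z),
          (∑ z' ∈ Finset.univ.filter fun z' => R (i, x0) (l, z'),
              (if z = z' then k else lam)) = k * lam + (k - lam) := by
        intro z hz
        have hterm : ∀ z' ∈ Finset.univ.filter fun z' => R (i, x0) (l, z'),
            (if z = z' then k else lam) = lam + (if z = z' then k - lam else 0) := by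
          intro z' _
          by_cases h : z = z' <;> simp [h]
          omega
        rw [Finset.sum_congr rfl hterm, Finset.sum_add_distrib, Finset.sum_const, hA,
          smul_eq_mul, Finset.sum_ite_eq, if_pos hz]
      rw [Finset.sum_congr rfl step2, Finset.sum_const, hA, smul_eq_mul]
    have hLHS :
        ∑ y : Fin v, (Finset.univ.filter fun z => R (i, x0) (l, z) ∧ R (j, y) (l, z)).card
            * (Finset.univ.filter fun z => R (i, x0) (l, z) ∧ R (j, y) (l, z)).card
          = k * (σ * σ) + (v - k) * (τ * τ) := by
      have hNy : ∀ y : Fin v,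
          (Finset.univ.filter fun z => R (i, x0) (l, z) ∧ R (j, y) (l, z)).card
            = if R (i, x0) (j, y) then σ else τ := fun y => hlink i j l x0 y hij hjl hil
      have hsq : ∀ y : Fin v,
          (Finset.univ.filter fun z => R (i, x0) (l, z) ∧ R (j, y) (l, z)).card
              * (Finset.univ.filter fun z => R (i, x0) (l, z) ∧ R (j, y) (l, z)).card
            = if R (i, x0) (j, y) then σ * σ else τ * τ := by
        intro y
        rw [hNy y]
        by_cases hy : R (i, x0) (j, y) <;> simp [hy]
      rw [Finset.sum_congr rfl fun y _ => hsq y, Finset.sum_ite, Finset.sum_const,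
        Finset.sum_const, hB, hBnot, smul_eq_mul, smul_eq_mul]
    rw [hLHS, hRHS] at hswap
    exact hswap
  -- ======== algebra over ℤ and ℝ ========
  have hkv' : (k:ℤ) ≤ v := by exact_mod_cast hkv.le
  have e1 : (σ:ℤ)*k + τ*((v:ℤ)-k) = k*k := by
    have := congrArg (Nat.cast : ℕ → ℤ) E1
    push_cast [Nat.cast_sub hkv.le] at this
    linarith
  have e2 : (σ:ℤ)^2*k + (τ:ℤ)^2*((v:ℤ)-k) = (k:ℤ)*((k:ℤ)*lam + ((k:ℤ)-lam)) := by
    have := congrArg (Nat.cast : ℕ → ℤ) E2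
    push_cast [Nat.cast_sub hkv.le, Nat.cast_sub hlk.le] at this
    ring_nf at this ⊢
    linarith
  have e3 : (k:ℤ) + ((v:ℤ)-1)*lam = (k:ℤ)*k := by
    have := congrArg (Nat.cast : ℕ → ℤ) E3
    push_cast [Nat.cast_sub hv] at this
    linarith
  have h1 : (v:ℤ)*τ = (k:ℤ)^2 - k*((σ:ℤ)-τ) := by linarith [e1]
  have h2 : (k:ℤ)^4 - k^2*((σ:ℤ)-τ)^2 + k*v*((σ:ℤ)-τ)^2
      = (v:ℤ)*k^2 + v*((k:ℤ)^2-k)*lam := by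
    linear_combination (v:ℤ)*e2 + (-((v:ℤ)-k)*τ - k*σ - (k:ℤ)^2) * h1
  have h3 : (k:ℤ)*((v:ℤ)-k)*(((σ:ℤ)-τ)^2) = (k:ℤ)*((v:ℤ)-k)*((k:ℤ)-lam) := by
    linear_combination h2 + (k:ℤ)^2*e3
  have hK0 : (0:ℤ) < k := by exact_mod_cast hk
  have hVK : (0:ℤ) < (v:ℤ) - k := by
    have : (k:ℤ) < v := by exact_mod_cast hkv
    linarith
  have hd2 : ((σ:ℤ)-τ)^2 = (k:ℤ) - lam := mul_left_cancel₀ (by positivity) h3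
  set d : ℤ := (σ:ℤ) - τ with hd
  refine ⟨d.natAbs, ?_, ?_⟩
  · have h5 : ((d.natAbs:ℤ))^2 = (k:ℤ) - lam := by rw [Int.natAbs_sq]; exact hd2
    have h6 : ((d.natAbs^2 : ℕ):ℤ) = ((k - lam : ℕ):ℤ) := by
      rw [Nat.cast_pow, Nat.cast_sub hlk.le, h5]
    exact (Nat.cast_injective h6).symm
  · have hvR : (v:ℝ) ≠ 0 := by positivity
    have h1R : (v:ℝ)*τ = (k:ℝ)^2 - k*((σ:ℝ)-τ) := by
      have := congrArg (Int.cast : ℤ → ℝ) h1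
      push_cast [hd] at this
      linarith
    rcases le_or_gt (τ:ℤ) σ with hle | hlt
    · have hmd : (d.natAbs : ℤ) = d := Int.natAbs_of_nonneg (by omega)
      have hmn : d.natAbs + τ = σ := by omega
      have hmR : (d.natAbs : ℝ) = (σ:ℝ) - τ := by
        have : ((d.natAbs + τ : ℕ):ℝ) = ((σ:ℕ):ℝ) :=
          by exact_mod_cast congrArg (Nat.cast : ℕ → ℝ) hmn
        push_cast at this
        linarith
      right
      constructor
      · field_simp
        linear_combination h1R - ((v:ℝ) - k) * hmR
      · field_simp
        linear_combination h1R + (k:ℝ) * hmR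
    · have hmd : (d.natAbs : ℤ) = -d := by
        rw [Int.ofNat_natAbs_of_nonpos (by omega)]
      have hmn : d.natAbs + σ = τ := by omega
      have hmR : (d.natAbs : ℝ) = (τ:ℝ) - σ := by
        have : ((d.natAbs + σ : ℕ):ℝ) = ((τ:ℕ):ℝ) :=
          by exact_mod_cast congrArg (Nat.cast : ℕ → ℝ) hmn
        push_cast at this
        linarith
      left
      constructor
      · field_simp
        linear_combination h1R + ((v:ℝ) - k) * hmR
      · field_simp
        linear_combination h1R - (k:ℝ) * hmR
end

section
/- With the setup of the previous counting lemma (linked system of symmetric (v,k,λ) designs, fibers X_1,...,X_f, relation R_1, parameters σ, τ), one has Σ_{S ∈ binom(X_1,4)} C(α(S),2) = (1/2)(f-1)v[(f-2)k·C(σ,4) + (v-1)·C(λ,4) + (f-2)(v-k)·C(τ,4)]. -/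
open Classical

lemma two_mul_choose_two' (n : ℕ) : 2 * n.choose 2 = n * n - n := by
  rcases n with _ | m
  · simp
  · rw [Nat.choose_two_right]
    have he : 2 ∣ (m + 1) * m := by
      rcases Nat.even_or_odd m with h | h
      · exact Dvd.dvd.mul_left h.two_dvd _
      · obtain ⟨t, ht⟩ := h
        exact Dvd.dvd.mul_right ⟨t + 1, by omega⟩ _
    rw [Nat.succ_sub_one, Nat.mul_div_cancel' he, Nat.mul_succ, Nat.add_sub_cancel]

/-- Second counting identity for linked systems of symmetric designs:
`2·Σ_{S ∈ binom(X₁,4)} C(α(S),2)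
  = (f-1)·v·[(f-2)·k·C(σ,4) + (v-1)·C(λ,4) + (f-2)·(v-k)·C(τ,4)]`. -/
theorem linked_design_second_count (f v k lam σ τ : ℕ) [NeZero f] (hf : 3 ≤ f)
    (R : Fin f × Fin v → Fin f × Fin v → Prop) [DecidableRel R]
    (hsym : ∀ p q, R p q ↔ R q p)
    (hreg : ∀ (i j : Fin f) (y : Fin v), i ≠ j →
      (Finset.univ.filter fun y' => R (i, y) (j, y')).card = k)
    (hsame : ∀ (i : Fin f) (y y' : Fin v), i ≠ 0 → y ≠ y' →
      (Finset.univ.filter fun x => R (0, x) (i, y) ∧ R (0, x) (i, y')).card = lam)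
    (hcross : ∀ (i j : Fin f) (y y' : Fin v), i ≠ 0 → j ≠ 0 → i ≠ j →
      (Finset.univ.filter fun x => R (0, x) (i, y) ∧ R (0, x) (j, y')).card =
        if R (i, y) (j, y') then σ else τ) :
    2 * ∑ S ∈ Finset.powersetCard 4 (Finset.univ : Finset (Fin v)),
        Nat.choose (((Finset.univ : Finset (Fin f × Fin v)).filter
          (fun y => y.1 ≠ 0 ∧ ∀ x ∈ S, R (0, x) y)).card) 2
      = (f - 1) * v * ((f - 2) * k * Nat.choose σ 4 + (v - 1) * Nat.choose lam 4
          + (f - 2) * (v - k) * Nat.choose τ 4) := by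
  classical
  rcases Nat.eq_zero_or_pos v with hv | hv
  · subst hv
    rw [Finset.powersetCard_eq_empty.2 (by simp)]
    simp
  have hk_le : k ≤ v := by
    have h := hreg ⟨1, by omega⟩ ⟨2, by omega⟩ ⟨0, hv⟩ (by simp)
    calc k = _ := h.symm
      _ ≤ (Finset.univ : Finset (Fin v)).card := Finset.card_filter_le _ _
      _ = v := by simp
  -- Step 1: double counting / swap of summation order
  have hswap : 2 * ∑ S ∈ Finset.powersetCard 4 (Finset.univ : Finset (Fin v)),
        Nat.choose (((Finset.univ : Finset (Fin f × Fin v)).filter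
          (fun y => y.1 ≠ 0 ∧ ∀ x ∈ S, R (0, x) y)).card) 2
      = ∑ p : (Fin f × Fin v) × (Fin f × Fin v),
          if p.1.1 ≠ 0 ∧ p.2.1 ≠ 0 ∧ p.1 ≠ p.2 then
            Nat.choose ((Finset.univ.filter fun x => R (0, x) p.1 ∧ R (0, x) p.2).card) 4
          else 0 := by
    rw [Finset.mul_sum]
    have hterm : ∀ S : Finset (Fin v),
        2 * Nat.choose (((Finset.univ : Finset (Fin f × Fin v)).filter
            (fun y => y.1 ≠ 0 ∧ ∀ x ∈ S, R (0, x) y)).card) 2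
        = ∑ p : (Fin f × Fin v) × (Fin f × Fin v),
            if p ∈ ((Finset.univ : Finset (Fin f × Fin v)).filter
              (fun y => y.1 ≠ 0 ∧ ∀ x ∈ S, R (0, x) y)).offDiag then 1 else 0 := by
      intro S
      rw [two_mul_choose_two', ← Finset.offDiag_card,
        Finset.sum_ite_mem, Finset.univ_inter, Finset.sum_const, smul_eq_mul, mul_one]
    simp_rw [hterm]
    rw [Finset.sum_comm]
    refine Finset.sum_congr rfl fun p _ => ?_
    by_cases hp : p.1.1 ≠ 0 ∧ p.2.1 ≠ 0 ∧ p.1 ≠ p.2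
    · rw [if_pos hp, ← Finset.card_filter]
      have hfe : (Finset.powersetCard 4 (Finset.univ : Finset (Fin v))).filter
          (fun S => p ∈ ((Finset.univ : Finset (Fin f × Fin v)).filter
            (fun y => y.1 ≠ 0 ∧ ∀ x ∈ S, R (0, x) y)).offDiag)
          = Finset.powersetCard 4 (Finset.univ.filter fun x => R (0, x) p.1 ∧ R (0, x) p.2) := by
        ext S
        simp only [Finset.mem_filter, Finset.mem_powersetCard, Finset.mem_offDiag,
          Finset.mem_univ, true_and, Finset.subset_iff]
        constructor
        · rintro ⟨⟨-, hcard⟩, ⟨-, h1⟩, ⟨-, h2⟩, -⟩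
          exact ⟨fun x hx => ⟨h1 x hx, h2 x hx⟩, hcard⟩
        · rintro ⟨hsub, hcard⟩
          exact ⟨⟨fun _ _ => trivial, hcard⟩, ⟨hp.1, fun x hx => (hsub hx).1⟩,
            ⟨hp.2.1, fun x hx => (hsub hx).2⟩, hp.2.2⟩
      rw [hfe, Finset.card_powersetCard]
    · rw [if_neg hp]
      refine Finset.sum_eq_zero fun S _ => ?_
      rw [if_neg]
      intro hmem
      rw [Finset.mem_offDiag] at hmem
      simp only [Finset.mem_filter] at hmem
      exact hp ⟨hmem.1.2.1, hmem.2.1.2.1, hmem.2.2⟩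
  rw [hswap]
  -- Step 2: evaluate the sum over ordered pairs of points in later fibers
  rw [Fintype.sum_prod_type]
  simp_rw [Fintype.sum_prod_type]
  have hinner : ∀ (i : Fin f) (a : Fin v), i ≠ 0 →
      (∑ j : Fin f, ∑ b : Fin v,
        if ((i, a) : Fin f × Fin v).1 ≠ 0 ∧ ((j, b) : Fin f × Fin v).1 ≠ 0 ∧
            ((i, a) : Fin f × Fin v) ≠ (j, b) then
          Nat.choose ((Finset.univ.filter fun x =>
            R (0, x) (i, a) ∧ R (0, x) (j, b)).card) 4
        else 0)
      = (v - 1) * Nat.choose lam 4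
        + (f - 2) * (k * Nat.choose σ 4 + (v - k) * Nat.choose τ 4) := by
    intro i a hi
    have hFsame : (∑ b : Fin v,
        if ((i, a) : Fin f × Fin v).1 ≠ 0 ∧ ((i, b) : Fin f × Fin v).1 ≠ 0 ∧
            ((i, a) : Fin f × Fin v) ≠ (i, b) then
          Nat.choose ((Finset.univ.filter fun x =>
            R (0, x) (i, a) ∧ R (0, x) (i, b)).card) 4
        else 0)
        = (v - 1) * Nat.choose lam 4 := by
      have hb : ∀ b : Fin v,
          (if ((i, a) : Fin f × Fin v).1 ≠ 0 ∧ ((i, b) : Fin f × Fin v).1 ≠ 0 ∧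
              ((i, a) : Fin f × Fin v) ≠ (i, b) then
            Nat.choose ((Finset.univ.filter fun x =>
              R (0, x) (i, a) ∧ R (0, x) (i, b)).card) 4
          else 0)
          = if b = a then 0 else Nat.choose lam 4 := by
        intro b
        by_cases hba : b = a
        · subst hba; simp
        · rw [if_pos ⟨hi, hi, by simp [Prod.ext_iff, Ne.symm hba]⟩,
            hsame i a b hi (Ne.symm hba), if_neg hba]
      simp_rw [hb]
      rw [Finset.sum_ite, Finset.sum_const_zero, zero_add, Finset.sum_const, smul_eq_mul]
      congr 1
      rw [Finset.filter_ne' Finset.univ a, Finset.card_erase_of_mem (Finset.mem_univ a)]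
      simp
    have hFcross : ∀ j : Fin f, j ≠ 0 → j ≠ i →
        (∑ b : Fin v,
          if ((i, a) : Fin f × Fin v).1 ≠ 0 ∧ ((j, b) : Fin f × Fin v).1 ≠ 0 ∧
              ((i, a) : Fin f × Fin v) ≠ (j, b) then
            Nat.choose ((Finset.univ.filter fun x =>
              R (0, x) (i, a) ∧ R (0, x) (j, b)).card) 4
          else 0)
        = k * Nat.choose σ 4 + (v - k) * Nat.choose τ 4 := by
      intro j hj0 hji
      have hb : ∀ b : Fin v,
          (if ((i, a) : Fin f × Fin v).1 ≠ 0 ∧ ((j, b) : Fin f × Fin v).1 ≠ 0 ∧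
              ((i, a) : Fin f × Fin v) ≠ (j, b) then
            Nat.choose ((Finset.univ.filter fun x =>
              R (0, x) (i, a) ∧ R (0, x) (j, b)).card) 4
          else 0)
          = if R (i, a) (j, b) then Nat.choose σ 4 else Nat.choose τ 4 := by
        intro b
        rw [if_pos ⟨hi, hj0, by simp [Prod.ext_iff]; intro h; exact absurd h.symm hji⟩,
          hcross i j a b hi hj0 (Ne.symm hji),
          apply_ite (fun n => Nat.choose n 4)]
      simp_rw [hb]
      rw [Finset.sum_ite, Finset.sum_const, Finset.sum_const, smul_eq_mul, smul_eq_mul]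
      have h1 : (Finset.univ.filter fun b => R (i, a) (j, b)).card = k :=
        hreg i j a (Ne.symm hji)
      have h2 : (Finset.univ.filter fun b => ¬ R (i, a) (j, b)).card = v - k := by
        have := Finset.card_filter_add_card_filter_not
          (s := (Finset.univ : Finset (Fin v))) (fun b => R (i, a) (j, b))
        rw [h1, Finset.card_univ, Fintype.card_fin] at this
        omega
      rw [h1, h2]
    have hFzero : (∑ b : Fin v,
        if ((i, a) : Fin f × Fin v).1 ≠ 0 ∧ (((0 : Fin f), b) : Fin f × Fin v).1 ≠ 0 ∧
            ((i, a) : Fin f × Fin v) ≠ (0, b) then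
          Nat.choose ((Finset.univ.filter fun x =>
            R (0, x) (i, a) ∧ R (0, x) (0, b)).card) 4
        else 0) = 0 :=
      Finset.sum_eq_zero fun b _ => if_neg (fun h => h.2.1 rfl)
    have hsub : ({0, i} : Finset (Fin f)) ⊆ Finset.univ := Finset.subset_univ _
    rw [← Finset.sum_sdiff hsub, Finset.sum_pair (Ne.symm hi), hFzero, zero_add, hFsame]
    have hconst : ∀ j ∈ Finset.univ \ ({0, i} : Finset (Fin f)),
        (∑ b : Fin v,
          if ((i, a) : Fin f × Fin v).1 ≠ 0 ∧ ((j, b) : Fin f × Fin v).1 ≠ 0 ∧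
              ((i, a) : Fin f × Fin v) ≠ (j, b) then
            Nat.choose ((Finset.univ.filter fun x =>
              R (0, x) (i, a) ∧ R (0, x) (j, b)).card) 4
          else 0)
        = k * Nat.choose σ 4 + (v - k) * Nat.choose τ 4 := by
      intro j hj
      simp only [Finset.mem_sdiff, Finset.mem_insert, Finset.mem_singleton] at hj
      exact hFcross j (fun h => hj.2 (Or.inl h)) (fun h => hj.2 (Or.inr h))
    rw [Finset.sum_congr rfl hconst, Finset.sum_const, smul_eq_mul,
      Finset.card_sdiff_of_subset hsub, Finset.card_univ, Fintype.card_fin,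
      Finset.card_pair (Ne.symm hi)]
    ring
  have houter : ∀ i : Fin f, i ≠ 0 →
      (∑ a : Fin v, ∑ j : Fin f, ∑ b : Fin v,
        if ((i, a) : Fin f × Fin v).1 ≠ 0 ∧ ((j, b) : Fin f × Fin v).1 ≠ 0 ∧
            ((i, a) : Fin f × Fin v) ≠ (j, b) then
          Nat.choose ((Finset.univ.filter fun x =>
            R (0, x) (i, a) ∧ R (0, x) (j, b)).card) 4
        else 0)
      = v * ((v - 1) * Nat.choose lam 4
        + (f - 2) * (k * Nat.choose σ 4 + (v - k) * Nat.choose τ 4)) := by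
    intro i hi
    rw [Finset.sum_congr rfl (fun a _ => hinner i a hi), Finset.sum_const, smul_eq_mul,
      Finset.card_univ, Fintype.card_fin]
  have hzero : (∑ a : Fin v, ∑ j : Fin f, ∑ b : Fin v,
        if (((0 : Fin f), a) : Fin f × Fin v).1 ≠ 0 ∧ ((j, b) : Fin f × Fin v).1 ≠ 0 ∧
            (((0 : Fin f), a) : Fin f × Fin v) ≠ (j, b) then
          Nat.choose ((Finset.univ.filter fun x =>
            R (0, x) (0, a) ∧ R (0, x) (j, b)).card) 4
        else 0) = 0 :=
    Finset.sum_eq_zero fun a _ => Finset.sum_eq_zero fun j _ =>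
      Finset.sum_eq_zero fun b _ => if_neg (fun h => h.1 rfl)
  rw [← Finset.sum_erase_add Finset.univ _ (Finset.mem_univ (0 : Fin f)), hzero, add_zero]
  rw [Finset.sum_congr rfl (fun i hi => houter i (Finset.ne_of_mem_erase hi)),
    Finset.sum_const, smul_eq_mul, Finset.card_erase_of_mem (Finset.mem_univ _),
    Finset.card_univ, Fintype.card_fin]
  ring
end

section
/- Let v ≥ 15 be an integer. Then there is no rational number k satisfying v(v+1)² + 4k²(v+3) - 4kv(v+3) = 0 with k an integer, because the discriminant condition requires v(v-1)(v+3) to be a perfect square. -/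
/-- For every integer `v ≥ 15`, there is no integer `k` with
`v(v+1)² + 4k²(v+3) - 4kv(v+3) = 0`. -/
theorem no_integral_quadratic_solution (v : ℤ) (hv : 15 ≤ v) :
    ¬ ∃ k : ℤ, v * (v + 1) ^ 2 + 4 * k ^ 2 * (v + 3) - 4 * k * v * (v + 3) = 0 := by
  rintro ⟨k, hk⟩
  have h1 : (v + 3) * (2 * k - v) ^ 2 = v * (v - 1) := by linear_combination hk
  have hdvd : (v + 3) ∣ 12 := ⟨(2 * k - v) ^ 2 - (v - 4), by linear_combination -h1⟩
  have := Int.le_of_dvd (by norm_num) hdvd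
  omega
end

section
/- Let C be a binary code of length d (d a perfect square, d = m², d > 4) with weight enumerator W_C(x,y) = x^d + (d(d-2)/2)·x^{(d+√d)/2} y^{(d-√d)/2} + 2(d-1)·x^{d/2} y^{d/2} + (d(d-2)/2)·x^{(d-√d)/2} y^{(d+√d)/2} + y^d. Then the MacWilliams transform (1/d²)·W_C(x+y, x-y) has zero coefficient on x^{d-j} y^j for j = 1, 2, 3, 4, 5, and the coefficient on x^{d-6} y^6 equals d(d-1)(d-2)(d-4)/360. -/
open Polynomial Finset

lemma cast_descFactorial' (n : ℕ) : ∀ j, j ≤ n →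
    (n.descFactorial j : ℚ) = ∏ i ∈ Finset.range j, ((n : ℚ) - i)
  | 0, _ => by simp
  | (j+1), h => by
    rw [Nat.descFactorial_succ, Finset.prod_range_succ, Nat.cast_mul,
      cast_descFactorial' n j (Nat.le_of_succ_le h),
      Nat.cast_sub (Nat.le_of_succ_le h)]
    ring

noncomputable def ch (x : ℚ) (j : ℕ) : ℚ := (∏ i ∈ Finset.range j, (x - i)) / (j.factorial : ℚ)

lemma cast_choose_ch (n j : ℕ) (h : j ≤ n) : (n.choose j : ℚ) = ch (n : ℚ) j := by
  have h1 := Nat.descFactorial_eq_factorial_mul_choose n j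
  have h2 : (j.factorial : ℚ) ≠ 0 := by positivity
  rw [ch, ← cast_descFactorial' n j h, h1, eq_div_iff h2]
  push_cast; ring

lemma coeff_one_sub_X_pow (n k : ℕ) :
    ((1 - X : ℚ[X]) ^ n).coeff k = (-1) ^ k * (n.choose k : ℚ) := by
  have h1 : (1 - X : ℚ[X]) = C (-1) * (X + C (-1)) := by
    rw [map_neg, C_1]; ring
  rw [h1, mul_pow, ← C_pow, coeff_C_mul, coeff_X_add_C_pow]
  rcases le_or_gt k n with h | h
  · have h2 : n = (n - k) + k := by omega
    rw [show ((-1:ℚ)^n) = (-1:ℚ)^((n-k)+k) from by rw [← h2]]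
    rw [pow_add]
    ring_nf
    rw [show (n-k)*2 = 2*(n-k) from by ring, pow_mul]
    norm_num
  · simp [Nat.choose_eq_zero_of_lt h]

lemma coeff_mix (a b j : ℕ) :
    ((1 + X : ℚ[X]) ^ a * (1 - X) ^ b).coeff j
      = ∑ i ∈ Finset.range (j + 1),
          (a.choose i : ℚ) * ((-1) ^ (j - i) * (b.choose (j - i) : ℚ)) := by
  rw [Polynomial.coeff_mul, Finset.Nat.sum_antidiagonal_eq_sum_range_succ_mk]
  refine Finset.sum_congr rfl fun i _ => ?_
  rw [Polynomial.coeff_one_add_X_pow, coeff_one_sub_X_pow]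

noncomputable def kerdockMacWilliams (d m : ℕ) : Polynomial ℚ :=
  Polynomial.C (((d : ℚ) ^ 2)⁻¹) *
    ((1 + Polynomial.X) ^ d
      + Polynomial.C ((d : ℚ) * ((d : ℚ) - 2) / 2)
          * (1 + Polynomial.X) ^ ((d + m) / 2) * (1 - Polynomial.X) ^ ((d - m) / 2)
      + Polynomial.C (2 * ((d : ℚ) - 1))
          * (1 + Polynomial.X) ^ (d / 2) * (1 - Polynomial.X) ^ (d / 2)
      + Polynomial.C ((d : ℚ) * ((d : ℚ) - 2) / 2)
          * (1 + Polynomial.X) ^ ((d - m) / 2) * (1 - Polynomial.X) ^ ((d + m) / 2)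
      + (1 - Polynomial.X) ^ d)

set_option maxHeartbeats 2000000 in
/-- For `d = m²` even, `d > 4`, the MacWilliams transform of the Kerdock-like weight
enumerator has vanishing coefficients in degrees `1,…,5`, and its degree-6 coefficient is
`d(d-1)(d-2)(d-4)/360`. -/
theorem kerdock_dual_weight_enumerator (d m : ℕ) (hm : 2 ≤ m) (hd : d = m ^ 2)
    (hd4 : 4 < d) (heven : Even d) :
    (∀ j, 1 ≤ j → j ≤ 5 → (kerdockMacWilliams d m).coeff j = 0) ∧
    (kerdockMacWilliams d m).coeff 6
      = (d : ℚ) * ((d : ℚ) - 1) * ((d : ℚ) - 2) * ((d : ℚ) - 4) / 360 := by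
  obtain ⟨k, hk⟩ : ∃ k, m = 2 * k := by
    have h1 : Even m := by
      have h2 := heven; rw [hd] at h2
      exact (Nat.even_pow.mp h2).1
    obtain ⟨r, hr⟩ := h1; exact ⟨r, by omega⟩
  have hdk : d = 4 * k ^ 2 := by rw [hd, hk]; ring
  have hk2 : 2 ≤ k := by nlinarith [hdk ▸ hd4]
  have hkk : k ≤ k ^ 2 := by nlinarith
  have hbig : k + 6 ≤ 2 * k ^ 2 := by nlinarith
  have e1 : (d + m) / 2 = 2 * k ^ 2 + k := by omega
  have e2 : (d - m) / 2 = 2 * k ^ 2 - k := by omega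
  have e3 : d / 2 = 2 * k ^ 2 := by omega
  have hcoeff : ∀ j, (kerdockMacWilliams d m).coeff j =
      ((d : ℚ) ^ 2)⁻¹ * ((d.choose j : ℚ)
        + ((d : ℚ) * ((d : ℚ) - 2) / 2) * ∑ i ∈ Finset.range (j + 1),
            (((2 * k ^ 2 + k).choose i : ℚ)) * ((-1) ^ (j - i) * (((2 * k ^ 2 - k).choose (j - i) : ℚ)))
        + (2 * ((d : ℚ) - 1)) * ∑ i ∈ Finset.range (j + 1),
            (((2 * k ^ 2).choose i : ℚ)) * ((-1) ^ (j - i) * (((2 * k ^ 2).choose (j - i) : ℚ)))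
        + ((d : ℚ) * ((d : ℚ) - 2) / 2) * ∑ i ∈ Finset.range (j + 1),
            (((2 * k ^ 2 - k).choose i : ℚ)) * ((-1) ^ (j - i) * (((2 * k ^ 2 + k).choose (j - i) : ℚ)))
        + (-1) ^ j * (d.choose j : ℚ)) := by
    intro j
    rw [kerdockMacWilliams, e1, e2, e3]
    simp only [mul_assoc, coeff_C_mul, coeff_add, coeff_one_add_X_pow,
      coeff_one_sub_X_pow, coeff_mix]
  have hdq : (d : ℚ) = 4 * (k : ℚ) ^ 2 := by rw [hdk]; push_cast; ring
  have Ha : ∀ j, j ≤ 6 → (((2 * k ^ 2 + k).choose j : ℚ)) = ch (2 * (k : ℚ) ^ 2 + k) j := by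
    intro j hj
    rw [cast_choose_ch _ _ (by nlinarith : j ≤ 2 * k ^ 2 + k)]
    congr 1; push_cast; ring
  have Hh : ∀ j, j ≤ 6 → (((2 * k ^ 2).choose j : ℚ)) = ch (2 * (k : ℚ) ^ 2) j := by
    intro j hj
    rw [cast_choose_ch _ _ (by nlinarith : j ≤ 2 * k ^ 2)]
    congr 1; push_cast; ring
  have Hb : ∀ j, j ≤ 6 → (((2 * k ^ 2 - k).choose j : ℚ)) = ch (2 * (k : ℚ) ^ 2 - k) j := by
    intro j hj
    rw [cast_choose_ch _ _ (by omega : j ≤ 2 * k ^ 2 - k)]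
    congr 1
    rw [Nat.cast_sub (by nlinarith : k ≤ 2 * k ^ 2)]
    push_cast; ring
  have Hd : ∀ j, j ≤ 6 → ((d.choose j : ℚ)) = ch (4 * (k : ℚ) ^ 2) j := by
    intro j hj
    rw [cast_choose_ch _ _ (by omega : j ≤ d), hdq]
  have hkq : (2 : ℚ) ≤ (k : ℚ) := by exact_mod_cast hk2
  have hk0 : (k : ℚ) ≠ 0 := by linarith
  constructor
  · intro j hj1 hj5
    interval_cases j <;>
    · rw [hcoeff]
      simp only [Finset.sum_range_succ, Finset.sum_range_zero, zero_add, Nat.reduceSub, Ha 0 (by norm_num), Ha 1 (by norm_num), Ha 2 (by norm_num), Ha 3 (by norm_num), Ha 4 (by norm_num), Ha 5 (by norm_num), Ha 6 (by norm_num), Hb 0 (by norm_num), Hb 1 (by norm_num), Hb 2 (by norm_num), Hb 3 (by norm_num), Hb 4 (by norm_num), Hb 5 (by norm_num), Hb 6 (by norm_num), Hh 0 (by norm_num), Hh 1 (by norm_num), Hh 2 (by norm_num), Hh 3 (by norm_num), Hh 4 (by norm_num), Hh 5 (by norm_num), Hh 6 (by norm_num), Hd 0 (by norm_num), Hd 1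 (by norm_num), Hd 2 (by norm_num), Hd 3 (by norm_num), Hd 4 (by norm_num), Hd 5 (by norm_num), Hd 6 (by norm_num)]
      norm_num [ch, Finset.prod_range_succ, Nat.factorial]
      try rw [hdq]
      try field_simp
      try ring
      try exact Or.inr trivial
  · rw [hcoeff]
    simp only [Finset.sum_range_succ, Finset.sum_range_zero, zero_add, Nat.reduceSub, Ha 0 (by norm_num), Ha 1 (by norm_num), Ha 2 (by norm_num), Ha 3 (by norm_num), Ha 4 (by norm_num), Ha 5 (by norm_num), Ha 6 (by norm_num), Hb 0 (by norm_num), Hb 1 (by norm_num), Hb 2 (by norm_num), Hb 3 (by norm_num), Hb 4 (by norm_num), Hb 5 (by norm_num), Hb 6 (by norm_num), Hh 0 (by norm_num), Hh 1 (by norm_num), Hh 2 (by norm_num), Hh 3 (by norm_num), Hh 4 (by norm_num), Hh 5 (by norm_num), Hh 6 (by norm_num), Hd 0 (by norm_num), Hd 1 (by norm_num), Hd 2 (by norm_num), Hd 3 (by norm_num), Hd 4 (by norm_num), Hd 5 (by norm_num), Hd 6 (by norm_num)]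
    norm_num [ch, Finset.prod_range_succ, Nat.factorial]
    rw [hdq]
    field_simp
    ring
end

section
/- Let M be real mutually unbiased bases of ℝ^d (d a perfect square, d ≥ 4), X = M ∪ (-M), z ∈ X, X_1(z) = {y ∈ X : ⟨y,z⟩ = 1/√d}, and suppose x, y ∈ X_1(z) lie in different bases. Then the number of w ∈ X_1(z) in the same basis as x with ⟨w,y⟩ = 1/√d equals (d+√d)/2 - 1 if ⟨x,y⟩ = 1/√d, and equals (d+√d)/2 if ⟨x,y⟩ = -1/√d. -/
open scoped RealInnerProductSpace

/-- In the subconstituent `X₁(z)` of a real MUB (`d` a perfect square, `d ≥ 4`), for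
`x, y ∈ X₁(z)` from different bases, the number of `w ∈ X₁(z)` in the same basis as `x`
(other than `x`) with `⟪w, y⟫ = 1/√d` equals `(d+√d)/2 - 1` if `⟪x,y⟫ = 1/√d` and
`(d+√d)/2` if `⟪x,y⟫ = -1/√d`. -/
theorem mub_subconstituent_cross_count (d f : ℕ) (hd : 4 ≤ d)
    (hsq : ∃ m : ℕ, d = m ^ 2) (hf : 2 ≤ f)
    (B : Fin f → Fin d → EuclideanSpace ℝ (Fin d))
    (horth : ∀ i, Orthonormal ℝ (B i))
    (hbasis : ∀ i, Submodule.span ℝ (Set.range (B i)) = ⊤)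
    (hmub : ∀ i j a b, i ≠ j →
      ⟪B i a, B j b⟫ = 1 / Real.sqrt d ∨ ⟪B i a, B j b⟫ = -(1 / Real.sqrt d))
    (z : EuclideanSpace ℝ (Fin d)) (hz : ∃ i a, z = B i a ∨ z = -B i a)
    (X₁ : Set (EuclideanSpace ℝ (Fin d)))
    (hX₁ : X₁ = {y | (∃ i a, y = B i a ∨ y = -B i a) ∧ ⟪y, z⟫ = 1 / Real.sqrt d})
    (x y : EuclideanSpace ℝ (Fin d)) (hx : x ∈ X₁) (hy : y ∈ X₁)
    (i j : Fin f) (hij : i ≠ j)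
    (hxi : ∃ a, x = B i a ∨ x = -B i a) (hyj : ∃ b, y = B j b ∨ y = -B j b) :
    (⟪x, y⟫ = 1 / Real.sqrt d →
      (({w ∈ X₁ | w ≠ x ∧ (∃ c, w = B i c ∨ w = -B i c) ∧
          ⟪w, y⟫ = 1 / Real.sqrt d}.ncard : ℝ) = ((d : ℝ) + Real.sqrt d) / 2 - 1)) ∧
    (⟪x, y⟫ = -(1 / Real.sqrt d) →
      (({w ∈ X₁ | w ≠ x ∧ (∃ c, w = B i c ∨ w = -B i c) ∧
          ⟪w, y⟫ = 1 / Real.sqrt d}.ncard : ℝ) = ((d : ℝ) + Real.sqrt d) / 2)) := by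
  classical
  set s : ℝ := Real.sqrt d with hs_def
  have hs2 : (2 : ℝ) ≤ s := by
    have : Real.sqrt 4 ≤ Real.sqrt d := Real.sqrt_le_sqrt (by exact_mod_cast hd)
    rwa [show (4:ℝ) = 2^2 by norm_num, Real.sqrt_sq (by norm_num)] at this
  have hs0 : (0:ℝ) < s := by linarith
  have hss : s * s = d := Real.mul_self_sqrt (by positivity)
  have hne : (1:ℝ)/s ≠ -(1/s) := by
    intro h
    have : (1:ℝ)/s > 0 := by positivity
    linarith [h ▸ this]
  -- z is (up to sign) a vector of some basis k, and k ≠ i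
  obtain ⟨k, a0, hzk⟩ := hz
  rw [hX₁] at hx hy
  obtain ⟨a, hxa⟩ := hxi
  have hxz : ⟪x, z⟫ = 1/s := hx.2
  have hyz : ⟪y, z⟫ = 1/s := hy.2
  have hik : i ≠ k := by
    rintro rfl
    have hbb : ⟪B i a, B i a0⟫ = if a = a0 then 1 else 0 :=
      orthonormal_iff_ite.mp (horth i) a a0
    have h1 : (1:ℝ)/s = ⟪B i a, B i a0⟫ ∨ (1:ℝ)/s = -⟪B i a, B i a0⟫ := by
      rw [← hxz]
      rcases hxa with rfl | rfl <;> rcases hzk with rfl | rfl <;>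
        simp [inner_neg_left, inner_neg_right]
    have hlt : (1:ℝ)/s < 1 := by rw [div_lt_one hs0]; linarith
    have hgt : (0:ℝ) < 1/s := by positivity
    rw [hbb] at h1
    rcases h1 with h | h <;> split_ifs at h <;> linarith
  -- inner products of basis i with z are ±1/√d
  have hBz : ∀ c, ⟪B i c, z⟫ = 1/s ∨ ⟪B i c, z⟫ = -(1/s) := by
    intro c
    rcases hzk with rfl | h
    · exact hmub i k c a0 hik
    · rcases hmub i k c a0 hik with h1 | h1
      · right; rw [h, inner_neg_right, h1]
      · left; rw [h, inner_neg_right, h1]; ring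
  -- the sign-corrected basis
  set w : Fin d → EuclideanSpace ℝ (Fin d) :=
    fun c => if ⟪B i c, z⟫ = 1/s then B i c else -B i c with hw_def
  have hwpm : ∀ c, w c = B i c ∨ w c = -B i c := by
    intro c; by_cases h : ⟪B i c, z⟫ = 1/s
    · left; simp only [hw_def]; rw [if_pos h]
    · right; simp only [hw_def]; rw [if_neg h]
  have hwz : ∀ c, ⟪w c, z⟫ = 1/s := by
    intro c
    by_cases h : ⟪B i c, z⟫ = 1/s
    · simp only [hw_def]; rw [if_pos h]; exact h
    · have h2 : ⟪B i c, z⟫ = -(1/s) := (hBz c).resolve_left h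
      simp only [hw_def]; rw [if_neg h, inner_neg_left, h2, neg_neg]
  -- uniqueness of the sign
  have hkey : ∀ (u : EuclideanSpace ℝ (Fin d)) (c : Fin d),
      (u = B i c ∨ u = -B i c) → ⟪u, z⟫ = 1/s → u = w c := by
    rintro u c (rfl | rfl) hu
    · simp only [hw_def]; rw [if_pos hu]
    · have h2 : ⟪B i c, z⟫ = -(1/s) := by
        rw [inner_neg_left] at hu; linarith
      have h3 : ¬ (⟪B i c, z⟫ = 1/s) := by rw [h2]; exact fun h => hne h.symm
      simp only [hw_def]; rw [if_neg h3]
  have hxw : x = w a := hkey x a hxa hxz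
  -- w is orthonormal
  have hworth : Orthonormal ℝ w := by
    rw [orthonormal_iff_ite]
    intro c c'
    rcases eq_or_ne c c' with rfl | hnecc
    · have h1 : ⟪B i c, B i c⟫ = 1 := by
        simpa using orthonormal_iff_ite.mp (horth i) c c
      rcases hwpm c with h | h <;>
        simp [h, inner_neg_left, inner_neg_right, h1, (horth i).1 c]
    · have h0 : ⟪B i c, B i c'⟫ = 0 := by
        simpa [hnecc] using orthonormal_iff_ite.mp (horth i) c c'
      rcases hwpm c with h | h <;> rcases hwpm c' with h' | h' <;>
        simp [h, h', inner_neg_left, inner_neg_right, h0, hnecc]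
  have hwinj : Function.Injective w := hworth.linearIndependent.injective
  have hspan : ⊤ ≤ Submodule.span ℝ (Set.range w) := by
    rw [← hbasis i, Submodule.span_le]
    rintro _ ⟨c, rfl⟩
    rcases hwpm c with h | h
    · exact Submodule.subset_span ⟨c, h⟩
    · have : B i c = -w c := by rw [h]; simp
      rw [this]
      exact Submodule.neg_mem _ (Submodule.subset_span ⟨c, rfl⟩)
  set b : OrthonormalBasis (Fin d) ℝ (EuclideanSpace ℝ (Fin d)) :=
    OrthonormalBasis.mk hworth hspan with hb_def
  -- Parseval
  have hpars : ∑ c, ⟪y, w c⟫ * ⟪w c, z⟫ = ⟪y, z⟫ := by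
    have := b.sum_inner_mul_inner y z
    simpa [hb_def, OrthonormalBasis.coe_mk] using this
  have hsum1 : ∑ c, ⟪y, w c⟫ = 1 := by
    have h1 : ∑ c, ⟪y, w c⟫ * ⟪w c, z⟫ = ∑ c, ⟪y, w c⟫ * (1/s) :=
      Finset.sum_congr rfl fun c _ => by rw [hwz c]
    have h2 : (∑ c, ⟪y, w c⟫) * (1/s) = 1/s := by
      rw [Finset.sum_mul, ← h1, hpars, hyz]
    have hs' : (1:ℝ)/s ≠ 0 := by positivity
    exact mul_right_cancel₀ hs' (by rw [h2, one_mul])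
  -- each ⟪w c, y⟫ is ±1/√d
  obtain ⟨e, hyb⟩ := hyj
  have hwy : ∀ c, ⟪w c, y⟫ = 1/s ∨ ⟪w c, y⟫ = -(1/s) := by
    intro c
    rcases hwpm c with h | h <;> rcases hyb with rfl | hy' <;>
      rcases hmub i j c e hij with h1 | h1
    · left; rw [h, h1]
    · right; rw [h, h1]
    · right; rw [h, hy', inner_neg_right, h1]
    · left; rw [h, hy', inner_neg_right, h1]; ring
    · right; rw [h, inner_neg_left, h1]
    · left; rw [h, inner_neg_left, h1]; ring
    · left; rw [h, hy', inner_neg_left, inner_neg_right, h1]; ring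
    · right; rw [h, hy', inner_neg_left, inner_neg_right, h1]; ring
  -- counting
  set P : Finset (Fin d) := Finset.univ.filter (fun c => ⟪w c, y⟫ = 1/s) with hP_def
  have hcard : (P.card : ℝ) = ((d:ℝ) + s) / 2 := by
    have hsplit := Finset.sum_filter_add_sum_filter_not Finset.univ
      (fun c => ⟪w c, y⟫ = 1/s) (fun c => ⟪w c, y⟫)
    have hP1 : ∑ c ∈ P, ⟪w c, y⟫ = P.card * (1/s) := by
      rw [Finset.sum_congr rfl (fun c hc => (Finset.mem_filter.mp hc).2),
        Finset.sum_const, nsmul_eq_mul]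
    set Q : Finset (Fin d) := Finset.univ.filter (fun c => ¬ ⟪w c, y⟫ = 1/s) with hQ_def
    have hQ1 : ∑ c ∈ Q, ⟪w c, y⟫ = Q.card * (-(1/s)) := by
      rw [Finset.sum_congr rfl (fun c hc =>
        (hwy c).resolve_left (Finset.mem_filter.mp hc).2),
        Finset.sum_const, nsmul_eq_mul]
    have hPQ : P.card + Q.card = d := by
      have := Finset.card_filter_add_card_filter_not
        (s := (Finset.univ : Finset (Fin d))) (p := fun c => ⟪w c, y⟫ = 1/s)
      simpa [hP_def, hQ_def] using this
    have hsum2 : ∑ c, ⟪w c, y⟫ = 1 := by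
      rw [← hsum1]
      exact Finset.sum_congr rfl fun c _ => real_inner_comm _ _
    rw [hP1, hQ1, hsum2] at hsplit
    have hPQ' : (P.card : ℝ) + (Q.card : ℝ) = d := by exact_mod_cast hPQ
    have hs' : s ≠ 0 := ne_of_gt hs0
    field_simp at hsplit
    nlinarith [hsplit, hPQ', hss]
  -- the target set as an image
  set T : Set (EuclideanSpace ℝ (Fin d)) :=
    {w ∈ X₁ | w ≠ x ∧ (∃ c, w = B i c ∨ w = -B i c) ∧ ⟪w, y⟫ = 1 / Real.sqrt d} with hT_def
  set R : Finset (Fin d) := Finset.univ.filter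
    (fun c => w c ≠ x ∧ ⟪w c, y⟫ = 1/s) with hR_def
  have hTR : T = ↑(R.image w) := by
    ext u
    simp only [hT_def, Set.mem_setOf_eq, Finset.coe_image, Set.mem_image,
      Finset.mem_coe, hR_def, Finset.mem_filter, Finset.mem_univ, true_and]
    constructor
    · rintro ⟨huX, hux, ⟨c, hc⟩, huy⟩
      have huz : ⟪u, z⟫ = 1/s := (hX₁ ▸ huX).2
      have : u = w c := hkey u c hc huz
      exact ⟨c, ⟨this ▸ hux, this ▸ huy⟩, this.symm⟩
    · rintro ⟨c, ⟨hcx, hcy⟩, rfl⟩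
      refine ⟨?_, hcx, ⟨c, hwpm c⟩, hcy⟩
      rw [hX₁]
      exact ⟨⟨i, c, hwpm c⟩, hwz c⟩
  have hTcard : (T.ncard : ℝ) = (R.card : ℝ) := by
    rw [hTR, Set.ncard_coe_finset, Finset.card_image_of_injective _ hwinj]
  constructor
  · intro hxy
    have haP : a ∈ P := by
      rw [hP_def, Finset.mem_filter]
      exact ⟨Finset.mem_univ a, by rw [← hxw]; exact hxy⟩
    have hRP : R = P.erase a := by
      ext c
      rw [hR_def, hP_def, Finset.mem_erase, Finset.mem_filter, Finset.mem_filter]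
      constructor
      · rintro ⟨_, hcx, hcy⟩
        refine ⟨fun h => hcx ?_, Finset.mem_univ c, hcy⟩
        rw [h, ← hxw]
      · rintro ⟨hca, _, hcy⟩
        exact ⟨Finset.mem_univ c, fun h => hca (hwinj (h.trans hxw)), hcy⟩
    have hP1 : 1 ≤ P.card := Finset.card_pos.mpr ⟨a, haP⟩
    have : (R.card : ℝ) = (P.card : ℝ) - 1 := by
      rw [hRP, Finset.card_erase_of_mem haP]
      have : (P.card : ℕ) - 1 + 1 = P.card := Nat.succ_pred_eq_of_pos hP1
      push_cast [Nat.cast_sub hP1]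
      ring
    rw [hTcard, this, hcard]
  · intro hxy
    have hRP : R = P := by
      ext c
      rw [hR_def, hP_def, Finset.mem_filter, Finset.mem_filter]
      constructor
      · rintro ⟨_, _, hcy⟩; exact ⟨Finset.mem_univ c, hcy⟩
      · rintro ⟨_, hcy⟩
        refine ⟨Finset.mem_univ c, fun h => ?_, hcy⟩
        rw [h] at hcy
        exact hne (hxy.symm.trans hcy).symm
    rw [hTcard, hRP, hcard]
end
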